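/- Let (C,T,C₀,⪰) be a target–context category. Then for every scalar w : I → I and every f : A → T⊗C₀, one has f ⪰ λ_{T⊗C₀}∘(w⊗f)∘λ_A^{-1}, where λ denotes the left unitor; that is, the morphism obtained by tensoring f with the scalar w lies below f in the ambient relation. (In fact f ⊒ λ_{T⊗C₀}∘(w⊗f)∘λ_A^{-1} holds.) -/

import Mathlib

open CategoryTheory MonoidalCategory

universe w v u v' u'

/-- A gs-monoidal category: a symmetric monoidal category in which every object carries a
commutative comonoid structure (copy and discard), compatible with tensor products. -/
class GSCat (C : Type u) [Category.{v} C] [MonoidalCategory C] [SymmetricCategory C] where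
  copy : ∀ A : C, A ⟶ A ⊗ A
  discard : ∀ A : C, A ⟶ 𝟙_ C
  copy_assoc : ∀ A : C, copy A ≫ (copy A ▷ A) ≫ (α_ A A A).hom = copy A ≫ (A ◁ copy A)
  copy_comm : ∀ A : C, copy A ≫ (β_ A A).hom = copy A
  copy_counit_left : ∀ A : C, copy A ≫ (discard A ▷ A) ≫ (λ_ A).hom = 𝟙 A
  copy_counit_right : ∀ A : C, copy A ≫ (A ◁ discard A) ≫ (ρ_ A).hom = 𝟙 A
  copy_tensor : ∀ A X : C, copy (A ⊗ X) = (copy A ⊗ₘ copy X) ≫ tensorμ A A X X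
  discard_tensor : ∀ A X : C, discard (A ⊗ X) = (discard A ⊗ₘ discard X) ≫ (λ_ (𝟙_ C)).hom
  discard_unit : discard (𝟙_ C) = 𝟙 (𝟙_ C)

variable {C : Type u} [Category.{v} C] [MonoidalCategory C] [SymmetricCategory C] [GSCat C]

/-- The domain `dom(f) = ρ_A ∘ (id_A ⊗ (ε_X ∘ f)) ∘ Δ_A` of a morphism `f : A ⟶ X`. -/
def gsDom {A X : C} (f : A ⟶ X) : A ⟶ A :=
  GSCat.copy A ≫ (A ◁ (f ≫ GSCat.discard X)) ≫ (ρ_ A).hom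

/-- A morphism is normalized if `f ∘ dom(f) = f`. -/
def GsNormalized {A X : C} (f : A ⟶ X) : Prop := gsDom f ≫ f = f

/-- A morphism is functional if `Δ_X ∘ f = (f ⊗ f) ∘ Δ_A`. -/
def GsFunctional {A X : C} (f : A ⟶ X) : Prop :=
  f ≫ GSCat.copy X = GSCat.copy A ≫ (f ⊗ₘ f)

/-- A morphism is total if `ε_X ∘ f = ε_A`. -/
def GsTotal {A X : C} (f : A ⟶ X) : Prop := f ≫ GSCat.discard X = GSCat.discard A

/-- `f ⊒ g` : `f` agrees with `g` on the domain of `g`, i.e. `f ∘ dom(g) = g`. -/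
def GsRestrict {A X : C} (f g : A ⟶ X) : Prop := gsDom g ≫ f = g

/-- A gs-monoidal category is normalized if all of its morphisms are normalized. -/
class GsNormalizedCat (C : Type u) [Category.{v} C] [MonoidalCategory C]
    [SymmetricCategory C] [GSCat C] : Prop where
  norm : ∀ {A X : C} (f : A ⟶ X), GsNormalized f

/-- A target--context category: a (normalized) gs-monoidal category with distinguished
objects `T` (targets) and `C0` (contexts) together with an ambient preorder on each
hom-set into `T ⊗ C0`, containing the restriction order and preserved by precomposition. -/
structure TCC (C : Type u) [Category.{v} C] [MonoidalCategory C] [SymmetricCategory C]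
    [GSCat C] (T C0 : C) where
  amb : ∀ {A : C}, (A ⟶ T ⊗ C0) → (A ⟶ T ⊗ C0) → Prop
  amb_refl : ∀ {A : C} (f : A ⟶ T ⊗ C0), amb f f
  amb_trans : ∀ {A : C} {f g h : A ⟶ T ⊗ C0}, amb f g → amb g h → amb f h
  amb_of_restrict : ∀ {A : C} {f g : A ⟶ T ⊗ C0}, GsRestrict f g → amb f g
  amb_precomp : ∀ {A Z : C} {f g : A ⟶ T ⊗ C0} (h : Z ⟶ A), amb f g → amb (h ≫ f) (h ≫ g)


/-- Left scalar action of `w : I ⟶ I` on an object `A`. -/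
def lscalar (w : 𝟙_ C ⟶ 𝟙_ C) (A : C) : A ⟶ A :=
  (λ_ A).inv ≫ (w ▷ A) ≫ (λ_ A).hom

lemma lscalar_natural (w : 𝟙_ C ⟶ 𝟙_ C) {A X : C} (f : A ⟶ X) :
    lscalar w A ≫ f = f ≫ lscalar w X := by
  simp only [lscalar, Category.assoc]
  rw [← leftUnitor_naturality, ← whisker_exchange_assoc, leftUnitor_inv_naturality_assoc]

lemma lscalar_unit (w : 𝟙_ C ⟶ 𝟙_ C) : lscalar w (𝟙_ C) = w := by
  simp only [lscalar, unitors_equal, unitors_inv_equal]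
  rw [rightUnitor_naturality, Iso.inv_hom_id_assoc]

lemma lscalar_rho (w : 𝟙_ C ⟶ 𝟙_ C) (A : C) :
    (A ◁ w) ≫ (ρ_ A).hom = (ρ_ A).hom ≫ lscalar w A := by
  have hβ : (ρ_ A).hom = (β_ A (𝟙_ C)).hom ≫ (λ_ A).hom := (braiding_leftUnitor A).symm
  rw [hβ, BraidedCategory.braiding_naturality_right_assoc]
  simp [lscalar]

lemma lscalar_comp_eq (w : 𝟙_ C ⟶ 𝟙_ C) {A X : C} (f : A ⟶ X) :
    (λ_ A).inv ≫ (w ⊗ₘ f) ≫ (λ_ X).hom = lscalar w A ≫ f := by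
  rw [MonoidalCategory.tensorHom_def]
  simp only [lscalar, Category.assoc]
  rw [leftUnitor_naturality]

/-- In a target--context category, tensoring `f : A ⟶ T ⊗ C0` with any scalar
`w : I ⟶ I` yields a morphism lying below `f` both in the restriction order `⊒` and hence in
the ambient relation `⪰`. -/
theorem scalar_tensor_below [GsNormalizedCat C] {T C0 : C} (𝒯 : TCC C T C0)
    {A : C} (w : 𝟙_ C ⟶ 𝟙_ C) (f : A ⟶ T ⊗ C0) :
    GsRestrict f ((λ_ A).inv ≫ (w ⊗ₘ f) ≫ (λ_ (T ⊗ C0)).hom) ∧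
    𝒯.amb f ((λ_ A).inv ≫ (w ⊗ₘ f) ≫ (λ_ (T ⊗ C0)).hom) := by
  have key : GsRestrict f ((λ_ A).inv ≫ (w ⊗ₘ f) ≫ (λ_ (T ⊗ C0)).hom) := by
    set g := (λ_ A).inv ≫ (w ⊗ₘ f) ≫ (λ_ (T ⊗ C0)).hom with hg
    have hgs : g = lscalar w A ≫ f := lscalar_comp_eq w f
    have hge : g ≫ GSCat.discard (T ⊗ C0)
        = (f ≫ GSCat.discard (T ⊗ C0)) ≫ w := by
      rw [hgs]
      simpa [Category.assoc, lscalar_unit] using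
        lscalar_natural w (f ≫ GSCat.discard (T ⊗ C0))
    have hdom : gsDom g = gsDom f ≫ lscalar w A := by
      unfold gsDom
      rw [hge]
      simp only [MonoidalCategory.whiskerLeft_comp, Category.assoc, lscalar_rho]
    unfold GsRestrict
    rw [hdom, Category.assoc, lscalar_natural w f, ← Category.assoc,
      GsNormalizedCat.norm f, ← lscalar_natural w f, ← hgs]
  exact ⟨key, 𝒯.amb_of_restrict key⟩
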